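/- For q > 0, the function a ↦ h(a) = cosh(a) · ∫_1^∞ (v^{2q}-1)^{-1/2} (cosh²(a)·v² - 1)^{-1/2} dv is strictly decreasing on (0, ∞); indeed its derivative equals −sinh(a) · ∫_1^∞ (v^{2q}-1)^{-1/2} (cosh²(a)·v² - 1)^{-3/2} dv, which is negative. -/

import Mathlib

set_option maxHeartbeats 1000000

open Real MeasureTheory Set

lemma meas_aux (q c p : ℝ) :
    Measurable (fun v : ℝ => (v ^ (2*q) - 1) ^ (-(1:ℝ)/2) * (c^2 * v^2 - 1) ^ p) := by
  fun_prop

lemma base_pos1 {q v : ℝ} (hq : 0 < q) (hv : 1 < v) : 0 < v ^ (2*q) - 1 := by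
  have h1 : (1:ℝ) < v ^ (2*q) :=
    (Real.one_lt_rpow_iff_of_pos (by linarith)).2 (Or.inl ⟨hv, by linarith⟩)
  linarith

lemma base_pos2 {c v : ℝ} (hc : 1 ≤ c) (hv : 1 < v) : 0 < c^2 * v^2 - 1 := by
  have h1 : (1:ℝ) ≤ c^2 := by nlinarith
  have h2 : (1:ℝ) < v^2 := by nlinarith
  nlinarith

lemma key_integrable (q c p : ℝ) (hq : 0 < q) (hc : 1 < c) (hp : p ≤ -(1:ℝ)/2) :
    IntegrableOn (fun v : ℝ => (v ^ (2*q) - 1) ^ (-(1:ℝ)/2) * (c^2 * v^2 - 1) ^ p) (Ioi 1) := by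
  have hc2 : 0 < c^2 - 1 := by nlinarith
  -- base case p = -1/2
  have hbase : IntegrableOn
      (fun v : ℝ => (v ^ (2*q) - 1) ^ (-(1:ℝ)/2) * (c^2 * v^2 - 1) ^ (-(1:ℝ)/2)) (Ioi 1) := by
    rw [← Ioc_union_Ioi_eq_Ioi (by norm_num : (1:ℝ) ≤ 2)]
    apply IntegrableOn.union
    · -- on Ioc 1 2, bound by C * (v-1)^(-1/2)
      set C : ℝ := q ^ (-(1:ℝ)/2) * (c^2 - 1) ^ (-(1:ℝ)/2) with hC
      have hint : IntegrableOn (fun v : ℝ => C * (v - 1) ^ (-(1:ℝ)/2)) (Ioc 1 2) := by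
        apply Integrable.const_mul
        have h0 := (intervalIntegral.intervalIntegrable_rpow'
          (a := 0) (b := 1) (by norm_num : (-1:ℝ) < -(1:ℝ)/2)).comp_sub_right 1
        rw [intervalIntegrable_iff_integrableOn_Ioc_of_le (by norm_num : (0:ℝ)+1 ≤ 1+1)] at h0
        norm_num at h0
        have heq : (-(1:ℝ)/2) = -(1/2:ℝ) := by norm_num
        rw [heq]
        exact h0
      apply hint.mono' ((meas_aux q c (-(1:ℝ)/2)).aestronglyMeasurable)
      rw [ae_restrict_iff' measurableSet_Ioc]
      filter_upwards with v hv
      obtain ⟨hv1, hv2⟩ := hv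
      have hv0 : (0:ℝ) < v := by linarith
      have h1 : 0 < v ^ (2*q) - 1 := base_pos1 hq hv1
      have h2 : 0 < c^2 * v^2 - 1 := base_pos2 hc.le hv1
      have hlog : q * (v - 1) ≤ v ^ (2*q) - 1 := by
        have hexp := Real.add_one_le_exp (Real.log v * (2*q))
        have hrw : v ^ (2*q) = Real.exp (Real.log v * (2*q)) := Real.rpow_def_of_pos hv0 _
        have hlogv : 1 - v⁻¹ ≤ Real.log v := Real.one_sub_inv_le_log_of_pos hv0
        have s1 : 2*q*Real.log v ≤ v ^ (2*q) - 1 := by rw [hrw]; nlinarith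
        have s3 : 2*q*(1 - v⁻¹) ≤ 2*q*Real.log v :=
          mul_le_mul_of_nonneg_left hlogv (by linarith)
        have s2 : q*(v-1) ≤ 2*q*(1 - v⁻¹) := by
          have hkey : 0 ≤ (v-1)*(2-v) := by nlinarith
          have hinv : 1 - v⁻¹ = (v-1)/v := by field_simp
          rw [hinv, show 2*q*((v-1)/v) = (2*q*(v-1))/v by ring, le_div_iff₀ hv0]
          nlinarith
        linarith
      have e1 : (v ^ (2*q) - 1) ^ (-(1:ℝ)/2) ≤ (q * (v - 1)) ^ (-(1:ℝ)/2) :=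
        Real.rpow_le_rpow_of_nonpos (by nlinarith) hlog (by norm_num)
      have e2 : (c^2 * v^2 - 1) ^ (-(1:ℝ)/2) ≤ (c^2 - 1) ^ (-(1:ℝ)/2) := by
        apply Real.rpow_le_rpow_of_nonpos hc2 ?_ (by norm_num)
        nlinarith [mul_nonneg (sq_nonneg c) (by nlinarith : (0:ℝ) ≤ v^2 - 1)]
      have e3 : (q * (v - 1)) ^ (-(1:ℝ)/2) = q ^ (-(1:ℝ)/2) * (v - 1) ^ (-(1:ℝ)/2) :=
        Real.mul_rpow hq.le (by linarith)
      have hnn1 : 0 ≤ (v ^ (2*q) - 1) ^ (-(1:ℝ)/2) := Real.rpow_nonneg h1.le _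
      have hnn2 : 0 ≤ (c^2 * v^2 - 1) ^ (-(1:ℝ)/2) := Real.rpow_nonneg h2.le _
      rw [Real.norm_eq_abs, abs_of_nonneg (mul_nonneg hnn1 hnn2), hC]
      calc (v ^ (2*q) - 1) ^ (-(1:ℝ)/2) * (c^2 * v^2 - 1) ^ (-(1:ℝ)/2)
          ≤ (q * (v - 1)) ^ (-(1:ℝ)/2) * (c^2 - 1) ^ (-(1:ℝ)/2) :=
            mul_le_mul e1 e2 hnn2 (Real.rpow_nonneg (by nlinarith) _)
        _ = q ^ (-(1:ℝ)/2) * (c^2 - 1) ^ (-(1:ℝ)/2) * (v - 1) ^ (-(1:ℝ)/2) := by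
            rw [e3]; ring
    · -- on Ioi 2, bound by C₂ * v^(-q-1)
      set k : ℝ := 1 - ((2:ℝ) ^ (2*q))⁻¹ with hk
      have h2q : (1:ℝ) < (2:ℝ) ^ (2*q) :=
        (Real.one_lt_rpow_iff_of_pos (by norm_num)).2 (Or.inl ⟨by norm_num, by linarith⟩)
      have hkpos : 0 < k := by
        rw [hk]; simp only [sub_pos]
        exact inv_lt_one_of_one_lt₀ h2q
      set C₂ : ℝ := k ^ (-(1:ℝ)/2) * (c^2 - 1) ^ (-(1:ℝ)/2) with hC₂
      have hint : IntegrableOn (fun v : ℝ => C₂ * v ^ (-q - 1)) (Ioi 2) :=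
        (integrableOn_Ioi_rpow_of_lt (by linarith) (by norm_num : (0:ℝ) < 2)).const_mul C₂
      apply hint.mono' ((meas_aux q c (-(1:ℝ)/2)).aestronglyMeasurable)
      rw [ae_restrict_iff' measurableSet_Ioi]
      filter_upwards with v hv
      rw [mem_Ioi] at hv
      have hv1 : (1:ℝ) < v := by linarith
      have hv0 : (0:ℝ) < v := by linarith
      have h1 : 0 < v ^ (2*q) - 1 := base_pos1 hq hv1
      have h2 : 0 < c^2 * v^2 - 1 := base_pos2 hc.le hv1
      have hpow : (2:ℝ) ^ (2*q) ≤ v ^ (2*q) :=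
        Real.rpow_le_rpow (by norm_num) hv.le (by linarith)
      have hkl : k * v ^ (2*q) ≤ v ^ (2*q) - 1 := by
        have h1le : (1:ℝ) ≤ v ^ (2*q) * ((2:ℝ) ^ (2*q))⁻¹ := by
          rw [le_mul_inv_iff₀ (by linarith)]; simpa using hpow
        rw [hk]
        have expand : (1 - ((2:ℝ) ^ (2*q))⁻¹) * v ^ (2*q)
            = v ^ (2*q) - v ^ (2*q) * ((2:ℝ) ^ (2*q))⁻¹ := by ring
        rw [expand]
        linarith
      have e1 : (v ^ (2*q) - 1) ^ (-(1:ℝ)/2) ≤ (k * v ^ (2*q)) ^ (-(1:ℝ)/2) :=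
        Real.rpow_le_rpow_of_nonpos (by positivity) hkl (by norm_num)
      have e2 : (c^2 * v^2 - 1) ^ (-(1:ℝ)/2) ≤ ((c^2-1) * v^2) ^ (-(1:ℝ)/2) := by
        apply Real.rpow_le_rpow_of_nonpos (by positivity) ?_ (by norm_num)
        have hv2 : (1:ℝ) ≤ v^2 := by nlinarith
        nlinarith [mul_nonneg (sq_nonneg c) (by linarith : (0:ℝ) ≤ v^2 - 1)]
      have e3 : (k * v ^ (2*q)) ^ (-(1:ℝ)/2) = k ^ (-(1:ℝ)/2) * v ^ (-q) := by
        rw [Real.mul_rpow hkpos.le (Real.rpow_nonneg hv0.le _), ← Real.rpow_mul hv0.le]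
        congr 1
        ring
      have e4 : ((c^2-1) * v^2) ^ (-(1:ℝ)/2) = (c^2-1) ^ (-(1:ℝ)/2) * v⁻¹ := by
        rw [Real.mul_rpow hc2.le (sq_nonneg v), ← Real.rpow_natCast v 2,
          ← Real.rpow_mul hv0.le,
          show ((2:ℕ):ℝ) * (-(1:ℝ)/2) = -1 by norm_num, Real.rpow_neg_one]
      have e5 : v ^ (-q-1) = v ^ (-q) * v⁻¹ := by
        rw [show -q-1 = -q + (-1) by ring, Real.rpow_add hv0, Real.rpow_neg_one]
      have hnn1 : 0 ≤ (v ^ (2*q) - 1) ^ (-(1:ℝ)/2) := Real.rpow_nonneg h1.le _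
      have hnn2 : 0 ≤ (c^2 * v^2 - 1) ^ (-(1:ℝ)/2) := Real.rpow_nonneg h2.le _
      rw [Real.norm_eq_abs, abs_of_nonneg (mul_nonneg hnn1 hnn2), hC₂]
      calc (v ^ (2*q) - 1) ^ (-(1:ℝ)/2) * (c^2 * v^2 - 1) ^ (-(1:ℝ)/2)
          ≤ (k * v ^ (2*q)) ^ (-(1:ℝ)/2) * ((c^2-1) * v^2) ^ (-(1:ℝ)/2) :=
            mul_le_mul e1 e2 hnn2 (Real.rpow_nonneg (by positivity) _)
        _ = k ^ (-(1:ℝ)/2) * (c^2-1) ^ (-(1:ℝ)/2) * v ^ (-q-1) := by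
            rw [e3, e4, e5]; ring
  -- general p
  set M : ℝ := (c^2 - 1) ^ (p + 1/2) with hM
  apply (hbase.const_mul M).mono' ((meas_aux q c p).aestronglyMeasurable)
  rw [ae_restrict_iff' measurableSet_Ioi]
  filter_upwards with v hv
  rw [mem_Ioi] at hv
  have h1 : 0 < v ^ (2*q) - 1 := base_pos1 hq hv
  have h2 : 0 < c^2 * v^2 - 1 := base_pos2 hc.le hv
  have hge : c^2 - 1 ≤ c^2 * v^2 - 1 := by
    nlinarith [mul_nonneg (sq_nonneg c) (by nlinarith : (0:ℝ) ≤ v^2 - 1)]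
  have split : (c^2 * v^2 - 1) ^ p
      = (c^2 * v^2 - 1) ^ (-(1:ℝ)/2) * (c^2 * v^2 - 1) ^ (p + 1/2) := by
    rw [← Real.rpow_add h2]
    congr 1
    ring
  have hbd : (c^2 * v^2 - 1) ^ (p + 1/2) ≤ M :=
    Real.rpow_le_rpow_of_nonpos hc2 hge (by linarith)
  have hnn1 : 0 ≤ (v ^ (2*q) - 1) ^ (-(1:ℝ)/2) := Real.rpow_nonneg h1.le _
  have hnn2 : 0 ≤ (c^2 * v^2 - 1) ^ p := Real.rpow_nonneg h2.le _
  rw [Real.norm_eq_abs, abs_of_nonneg (mul_nonneg hnn1 hnn2), split]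
  calc (v ^ (2*q) - 1) ^ (-(1:ℝ)/2) * ((c^2 * v^2 - 1) ^ (-(1:ℝ)/2) * (c^2*v^2-1) ^ (p+1/2))
      ≤ (v ^ (2*q) - 1) ^ (-(1:ℝ)/2) * ((c^2 * v^2 - 1) ^ (-(1:ℝ)/2) * M) := by
        apply mul_le_mul_of_nonneg_left _ hnn1
        exact mul_le_mul_of_nonneg_left hbd (Real.rpow_nonneg h2.le _)
    _ = M * ((v ^ (2*q) - 1) ^ (-(1:ℝ)/2) * (c^2 * v^2 - 1) ^ (-(1:ℝ)/2)) := by ring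

lemma deriv_aux (q v x : ℝ) (hv : 1 < v) :
    HasDerivAt (fun y : ℝ => Real.cosh y * ((v ^ (2*q) - 1) ^ (-(1:ℝ)/2) *
        ((Real.cosh y)^2 * v^2 - 1) ^ (-(1:ℝ)/2)))
      (-Real.sinh x * ((v ^ (2*q) - 1) ^ (-(1:ℝ)/2) *
        ((Real.cosh x)^2 * v^2 - 1) ^ (-(3:ℝ)/2))) x := by
  have hG : 0 < (Real.cosh x)^2 * v^2 - 1 := base_pos2 (Real.one_le_cosh x) hv
  set K : ℝ := (v ^ (2*q) - 1) ^ (-(1:ℝ)/2) with hK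
  have h1 : HasDerivAt (fun y : ℝ => (Real.cosh y)^2 * v^2 - 1)
      ((2 * Real.cosh x ^ 1 * Real.sinh x) * v^2) x :=
    (((Real.hasDerivAt_cosh x).pow 2).mul_const _).sub_const 1
  have h2 := h1.rpow_const (p := -(1:ℝ)/2) (Or.inl hG.ne')
  have h3 := (Real.hasDerivAt_cosh x).mul h2
  have h4 := h3.const_mul K
  have hfun : (fun y : ℝ => K * (Real.cosh y * ((Real.cosh y)^2 * v^2 - 1) ^ (-(1:ℝ)/2)))
      = fun y : ℝ => Real.cosh y * (K * ((Real.cosh y)^2 * v^2 - 1) ^ (-(1:ℝ)/2)) := by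
    funext y; ring
  simp only [Pi.mul_apply] at h4
  rw [hfun] at h4
  refine h4.congr_deriv ?_
  have e2 : ((Real.cosh x)^2 * v^2 - 1) ^ (-(1:ℝ)/2)
      = ((Real.cosh x)^2 * v^2 - 1) * ((Real.cosh x)^2 * v^2 - 1) ^ (-(3:ℝ)/2) := by
    rw [show (-(1:ℝ)/2) = 1 + (-(3:ℝ)/2) by norm_num, Real.rpow_add hG, Real.rpow_one]
  have e3 : ((Real.cosh x)^2 * v^2 - 1) ^ (-(1:ℝ)/2 - 1)
      = ((Real.cosh x)^2 * v^2 - 1) ^ (-(3:ℝ)/2) := by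
    norm_num
  rw [e3, e2]
  ring

lemma main_deriv (q : ℝ) (hq : 0 < q) (a : ℝ) (ha : 0 < a) :
    HasDerivAt (fun x : ℝ => Real.cosh x *
        ∫ v in Ioi (1 : ℝ), (v ^ (2 * q) - 1) ^ (-(1 : ℝ) / 2) *
          ((Real.cosh x) ^ 2 * v ^ 2 - 1) ^ (-(1 : ℝ) / 2))
      (-(Real.sinh a) * ∫ v in Ioi (1 : ℝ), (v ^ (2 * q) - 1) ^ (-(1 : ℝ) / 2) *
          ((Real.cosh a) ^ 2 * v ^ 2 - 1) ^ (-(3 : ℝ) / 2)) a := by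
  have hca : (1:ℝ) < Real.cosh a := Real.one_lt_cosh.2 ha.ne'
  have hc0 : (1:ℝ) < Real.cosh (a/2) := Real.one_lt_cosh.2 (by positivity)
  set F : ℝ → ℝ → ℝ := fun x v => Real.cosh x * ((v ^ (2*q) - 1) ^ (-(1:ℝ)/2) *
      ((Real.cosh x)^2 * v^2 - 1) ^ (-(1:ℝ)/2)) with hF
  set F' : ℝ → ℝ → ℝ := fun x v => -Real.sinh x * ((v ^ (2*q) - 1) ^ (-(1:ℝ)/2) *
      ((Real.cosh x)^2 * v^2 - 1) ^ (-(3:ℝ)/2)) with hF'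
  set bound : ℝ → ℝ := fun v => Real.sinh (a + a/2) * ((v ^ (2*q) - 1) ^ (-(1:ℝ)/2) *
      ((Real.cosh (a/2))^2 * v^2 - 1) ^ (-(3:ℝ)/2)) with hbound
  have key := hasDerivAt_integral_of_dominated_loc_of_deriv_le
    (μ := volume.restrict (Ioi (1:ℝ))) (x₀ := a) (F := F) (F' := F') (bound := bound)
    (Metric.ball_mem_nhds a (half_pos ha))
    (Filter.Eventually.of_forall fun x =>
      (((meas_aux q (Real.cosh x) (-(1:ℝ)/2)).const_mul (Real.cosh x)).aestronglyMeasurable))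
    ((key_integrable q (Real.cosh a) (-(1:ℝ)/2) hq hca le_rfl).const_mul (Real.cosh a))
    (((meas_aux q (Real.cosh a) (-(3:ℝ)/2)).const_mul (-Real.sinh a)).aestronglyMeasurable)
    ?_ ?_ ?_
  · obtain ⟨-, hkey⟩ := key
    have hfun : (fun x : ℝ => ∫ v in Ioi (1:ℝ), F x v) = fun x : ℝ => Real.cosh x *
        ∫ v in Ioi (1 : ℝ), (v ^ (2 * q) - 1) ^ (-(1 : ℝ) / 2) *
          ((Real.cosh x) ^ 2 * v ^ 2 - 1) ^ (-(1 : ℝ) / 2) := by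
      funext x
      exact MeasureTheory.integral_const_mul _ _
    have hval : (∫ v in Ioi (1:ℝ), F' a v) = -(Real.sinh a) *
        ∫ v in Ioi (1 : ℝ), (v ^ (2 * q) - 1) ^ (-(1 : ℝ) / 2) *
          ((Real.cosh a) ^ 2 * v ^ 2 - 1) ^ (-(3 : ℝ) / 2) := MeasureTheory.integral_const_mul _ _
    rw [hfun, hval] at hkey
    exact hkey
  · -- bound
    rw [ae_restrict_iff' measurableSet_Ioi]
    filter_upwards with v hv
    intro x hx
    rw [mem_Ioi] at hv
    rw [Real.ball_eq_Ioo] at hx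
    obtain ⟨hx1, hx2⟩ := hx
    have hxpos : 0 < x := by linarith
    have hGx : 0 < (Real.cosh x)^2 * v^2 - 1 := base_pos2 (Real.one_le_cosh x) hv
    have hG0 : 0 < (Real.cosh (a/2))^2 * v^2 - 1 := base_pos2 hc0.le hv
    have h1 : 0 < v ^ (2*q) - 1 := base_pos1 hq hv
    have hcosh : Real.cosh (a/2) ≤ Real.cosh x := by
      rw [Real.cosh_le_cosh, abs_of_pos (by positivity), abs_of_pos hxpos]
      linarith
    have hGle : (Real.cosh (a/2))^2 * v^2 - 1 ≤ (Real.cosh x)^2 * v^2 - 1 := by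
      have hc' : (0:ℝ) < Real.cosh (a/2) := by positivity
      have hsq : Real.cosh (a/2)^2 ≤ Real.cosh x^2 := by nlinarith
      nlinarith [mul_le_mul_of_nonneg_right hsq (sq_nonneg v)]
    have hple : ((Real.cosh x)^2 * v^2 - 1) ^ (-(3:ℝ)/2)
        ≤ ((Real.cosh (a/2))^2 * v^2 - 1) ^ (-(3:ℝ)/2) :=
      Real.rpow_le_rpow_of_nonpos hG0 hGle (by norm_num)
    have hsinh : Real.sinh x ≤ Real.sinh (a + a/2) := Real.sinh_le_sinh.2 (by linarith)
    have hsx : 0 < Real.sinh x := Real.sinh_pos_iff.2 hxpos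
    have hnnf : 0 ≤ (v ^ (2*q) - 1) ^ (-(1:ℝ)/2) := Real.rpow_nonneg h1.le _
    have hnnG : 0 ≤ ((Real.cosh x)^2 * v^2 - 1) ^ (-(3:ℝ)/2) := Real.rpow_nonneg hGx.le _
    have hnorm : ‖F' x v‖ = Real.sinh x * ((v ^ (2*q) - 1) ^ (-(1:ℝ)/2) *
        ((Real.cosh x)^2 * v^2 - 1) ^ (-(3:ℝ)/2)) := by
      rw [hF', Real.norm_eq_abs, abs_mul, abs_neg, abs_of_pos hsx,
        abs_of_nonneg (mul_nonneg hnnf hnnG)]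
    rw [hnorm, hbound]
    apply mul_le_mul hsinh ?_ (mul_nonneg hnnf hnnG) (by positivity)
    exact mul_le_mul_of_nonneg_left hple hnnf
  · -- bound integrable
    exact (key_integrable q (Real.cosh (a/2)) (-(3:ℝ)/2) hq hc0 (by norm_num)).const_mul _
  · -- differentiability
    rw [ae_restrict_iff' measurableSet_Ioi]
    filter_upwards with v hv
    intro x _
    rw [mem_Ioi] at hv
    exact deriv_aux q v x hv

theorem stmt_3 (q : ℝ) (hq : 0 < q)
    (h : ℝ → ℝ)
    (hdef : ∀ a : ℝ, h a = Real.cosh a *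
      ∫ v in Ioi (1 : ℝ), (v ^ (2 * q) - 1) ^ (-(1 : ℝ) / 2) *
        ((Real.cosh a) ^ 2 * v ^ 2 - 1) ^ (-(1 : ℝ) / 2)) :
    StrictAntiOn h (Ioi 0) ∧
    ∀ a ∈ Ioi (0 : ℝ),
      HasDerivAt h
        (-(Real.sinh a) * ∫ v in Ioi (1 : ℝ), (v ^ (2 * q) - 1) ^ (-(1 : ℝ) / 2) *
          ((Real.cosh a) ^ 2 * v ^ 2 - 1) ^ (-(3 : ℝ) / 2)) a ∧
      -(Real.sinh a) * (∫ v in Ioi (1 : ℝ), (v ^ (2 * q) - 1) ^ (-(1 : ℝ) / 2) *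
          ((Real.cosh a) ^ 2 * v ^ 2 - 1) ^ (-(3 : ℝ) / 2)) < 0 := by
  have hrepr : h = fun x : ℝ => Real.cosh x *
      ∫ v in Ioi (1 : ℝ), (v ^ (2 * q) - 1) ^ (-(1 : ℝ) / 2) *
        ((Real.cosh x) ^ 2 * v ^ 2 - 1) ^ (-(1 : ℝ) / 2) := funext hdef
  have hD : ∀ a ∈ Ioi (0:ℝ), HasDerivAt h
      (-(Real.sinh a) * ∫ v in Ioi (1 : ℝ), (v ^ (2 * q) - 1) ^ (-(1 : ℝ) / 2) *
        ((Real.cosh a) ^ 2 * v ^ 2 - 1) ^ (-(3 : ℝ) / 2)) a := by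
    intro a ha
    rw [mem_Ioi] at ha
    rw [hrepr]
    exact main_deriv q hq a ha
  have hneg : ∀ a ∈ Ioi (0:ℝ),
      -(Real.sinh a) * (∫ v in Ioi (1 : ℝ), (v ^ (2 * q) - 1) ^ (-(1 : ℝ) / 2) *
        ((Real.cosh a) ^ 2 * v ^ 2 - 1) ^ (-(3 : ℝ) / 2)) < 0 := by
    intro a ha
    rw [mem_Ioi] at ha
    have hca : (1:ℝ) < Real.cosh a := Real.one_lt_cosh.2 ha.ne'
    have hIpos : 0 < ∫ v in Ioi (1 : ℝ), (v ^ (2 * q) - 1) ^ (-(1 : ℝ) / 2) *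
        ((Real.cosh a) ^ 2 * v ^ 2 - 1) ^ (-(3 : ℝ) / 2) := by
      have hInt := key_integrable q (Real.cosh a) (-(3:ℝ)/2) hq hca (by norm_num)
      have h0le : 0 ≤ᵐ[volume.restrict (Ioi (1:ℝ))]
          (fun v : ℝ => (v ^ (2 * q) - 1) ^ (-(1 : ℝ) / 2) *
            ((Real.cosh a) ^ 2 * v ^ 2 - 1) ^ (-(3 : ℝ) / 2)) := by
        refine (ae_restrict_iff' measurableSet_Ioi).2
          (Filter.Eventually.of_forall fun v hv => ?_)
        rw [mem_Ioi] at hv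
        show (0:ℝ) ≤ _
        have h1 : 0 < v ^ (2*q) - 1 := base_pos1 hq hv
        have h2 : 0 < (Real.cosh a)^2 * v^2 - 1 := base_pos2 hca.le hv
        exact (mul_pos (Real.rpow_pos_of_pos h1 _) (Real.rpow_pos_of_pos h2 _)).le
      rw [setIntegral_pos_iff_support_of_nonneg_ae h0le hInt]
      · have hsub : Ioi (1:ℝ) ⊆ Function.support
            (fun v : ℝ => (v ^ (2 * q) - 1) ^ (-(1 : ℝ) / 2) *
              ((Real.cosh a) ^ 2 * v ^ 2 - 1) ^ (-(3 : ℝ) / 2)) := by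
          intro v hv
          rw [mem_Ioi] at hv
          have h1 : 0 < v ^ (2*q) - 1 := base_pos1 hq hv
          have h2 : 0 < (Real.cosh a)^2 * v^2 - 1 := base_pos2 hca.le hv
          have : 0 < (v ^ (2 * q) - 1) ^ (-(1 : ℝ) / 2) *
              ((Real.cosh a) ^ 2 * v ^ 2 - 1) ^ (-(3 : ℝ) / 2) :=
            mul_pos (Real.rpow_pos_of_pos h1 _) (Real.rpow_pos_of_pos h2 _)
          exact Function.mem_support.2 this.ne'
        calc (0:ENNReal) < volume (Ioi (1:ℝ)) := by simp [Real.volume_Ioi]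
          _ ≤ volume (Function.support _ ∩ Ioi (1:ℝ)) := by
              apply measure_mono
              intro v hv
              exact ⟨hsub hv, hv⟩
    have hs : 0 < Real.sinh a := Real.sinh_pos_iff.2 ha
    exact mul_neg_of_neg_of_pos (by linarith) hIpos
  refine ⟨?_, fun a ha => ⟨hD a ha, hneg a ha⟩⟩
  apply strictAntiOn_of_deriv_neg (convex_Ioi 0)
  · intro x hx
    exact (hD x hx).continuousAt.continuousWithinAt
  · intro x hx
    rw [interior_Ioi] at hx
    rw [(hD x hx).deriv]
    exact hneg x hx
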